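/- Let w : {0,…,n}×{0,…,m} → ℝ be a mesh function satisfying, for all interior k ∈ {1,…,n−1} and all j < m, the discrete dorsal-closure scheme (D_t w)^j_k = (1/(1 + ((D₀w)^j_k)²)) · ( (D²w)^j_k + (D₀w)^j_k / L[w^j] ). If (δu)² ≥ 2δt and 2ρ₀ ≥ δu, then for every j < m, max_{0≤k≤n} |w^{j+1}_k| ≤ max{ max_{0≤k≤n} |w^j_k|, |w^{j+1}_0|, |w^{j+1}_n| }. -/
import Mathlib


noncomputable section

open Finset

/-- The forward difference operator `(D₊v)_k = (v_{k+1} - v_k)/δu`. -/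
def dplus (δu : ℝ) (v : ℕ → ℝ) (k : ℕ) : ℝ := (v (k + 1) - v k) / δu

/-- The centred difference operator `(D₀v)_k = (v_{k+1} - v_{k-1})/(2δu)`
(used only at interior indices `k ≥ 1`). -/
def d0 (δu : ℝ) (v : ℕ → ℝ) (k : ℕ) : ℝ := (v (k + 1) - v (k - 1)) / (2 * δu)

/-- The second difference operator
`(D²v)_k = (v_{k+1} - 2v_k + v_{k-1})/δu²`. -/
def d2 (δu : ℝ) (v : ℕ → ℝ) (k : ℕ) : ℝ :=
  (v (k + 1) - 2 * v k + v (k - 1)) / δu ^ 2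

/-- The forward time difference operator `(D_t w)^j_k = (w^{j+1}_k - w^j_k)/δt`
for a mesh function `w` (time index first). -/
def dtime (δt : ℝ) (w : ℕ → ℕ → ℝ) (j k : ℕ) : ℝ := (w (j + 1) k - w j k) / δt

/-- The discrete length functional
`L[v] = δu Σ_{i<n} √(1 + ((D₊v)_i)²)`. -/
def dlen (δu : ℝ) (n : ℕ) (v : ℕ → ℝ) : ℝ :=
  δu * ∑ i ∈ Finset.range n, Real.sqrt (1 + dplus δu v i ^ 2)

/-- The discrete sup-norm (maximum of absolute values) over a finite set of
spatial indices. -/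
def supOn (s : Finset ℕ) (v : ℕ → ℝ) : ℝ := s.fold max 0 (fun k => |v k|)

/-- Theorem 6.4, sup bound for the numeric scheme: if `w`
solves the discrete dorsal-closure scheme at all interior indices, and the step
sizes satisfy `δu² ≥ 2δt` and `2ρ₀ ≥ δu`, then
`max_k |w^{j+1}_k| ≤ max{max_k |w^j_k|, |w^{j+1}_0|, |w^{j+1}_n|}`. -/
theorem discrete_scheme_sup_bound (ρ₀ T : ℝ) (hρ : 0 < ρ₀) (hT : 0 < T)
    (n m : ℕ) (hn : 0 < n) (hm : 0 < m) (w : ℕ → ℕ → ℝ)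
    (hscheme : ∀ j, j < m → ∀ k, 0 < k → k < n →
      dtime (T / m) w j k =
        (1 + d0 (ρ₀ / n) (w j) k ^ 2)⁻¹ *
          (d2 (ρ₀ / n) (w j) k + d0 (ρ₀ / n) (w j) k / dlen (ρ₀ / n) n (w j)))
    (hstep : (ρ₀ / n) ^ 2 ≥ 2 * (T / m))
    (hsmall : 2 * ρ₀ ≥ ρ₀ / n) :
    ∀ j, j < m →
      supOn (Finset.range (n + 1)) (w (j + 1)) ≤
        max (supOn (Finset.range (n + 1)) (w j))
          (max |w (j + 1) 0| |w (j + 1) n|) := by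
  intro j hj
  have hn' : (n:ℝ) ≠ 0 := Nat.cast_ne_zero.2 hn.ne'
  have hδu0 : (0:ℝ) < ρ₀ / n := div_pos hρ (by exact_mod_cast hn)
  have hδt0 : (0:ℝ) < T / m := div_pos hT (by exact_mod_cast hm)
  set δu : ℝ := ρ₀ / n with hδu
  set δt : ℝ := T / m with hδt
  set M := supOn (Finset.range (n+1)) (w j) with hM
  set R := max M (max |w (j + 1) 0| |w (j + 1) n|) with hR
  have hR0 : (0:ℝ) ≤ R :=
    le_trans (abs_nonneg _) (le_trans (le_max_left _ _) (le_max_right _ _))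
  have hMem : ∀ k, k ∈ Finset.range (n+1) → |w j k| ≤ M := fun k hk =>
    (Finset.le_fold_max _).2 (Or.inr ⟨k, hk, le_rfl⟩)
  rw [supOn, Finset.fold_max_le]
  refine ⟨hR0, ?_⟩
  intro k hk
  rcases Nat.eq_zero_or_pos k with rfl | hk0
  · exact le_trans (le_max_left _ _) (le_max_right _ _)
  rcases eq_or_lt_of_le (Nat.lt_succ_iff.1 (Finset.mem_range.1 hk)) with rfl | hkn
  · exact le_trans (le_max_right _ _) (le_max_right _ _)
  -- interior point
  have hs := hscheme j hj k hk0 hkn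
  set p := d0 δu (w j) k with hp
  set L := dlen δu n (w j) with hLdef
  have hL : ρ₀ ≤ L := by
    have h1 : (n:ℝ) ≤ ∑ i ∈ Finset.range n, Real.sqrt (1 + dplus δu (w j) i ^ 2) := by
      have hb : ∀ i ∈ Finset.range n, (1:ℝ) ≤ Real.sqrt (1 + dplus δu (w j) i ^ 2) := by
        intro i _
        have hx : (0:ℝ) ≤ 1 + dplus δu (w j) i ^ 2 := by positivity
        nlinarith [Real.sq_sqrt hx, Real.sqrt_nonneg (1 + dplus δu (w j) i ^ 2),
          sq_nonneg (dplus δu (w j) i)]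
      calc (n:ℝ) = ∑ _i ∈ Finset.range n, (1:ℝ) := by simp
        _ ≤ _ := Finset.sum_le_sum hb
    calc ρ₀ = δu * n := by rw [hδu]; field_simp
      _ ≤ L := by
          rw [hLdef]; simp only [dlen]
          exact mul_le_mul_of_nonneg_left h1 hδu0.le
  have hL0 : (0:ℝ) < L := lt_of_lt_of_le hρ hL
  set q : ℝ := 1 + p ^ 2 with hq
  have hq1 : (1:ℝ) ≤ q := by nlinarith [sq_nonneg p]
  have hq0 : (0:ℝ) < q := by linarith
  have hδune : δu ≠ 0 := ne_of_gt hδu0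
  have hδtne : δt ≠ 0 := ne_of_gt hδt0
  have hLne : L ≠ 0 := ne_of_gt hL0
  have hqne : q ≠ 0 := ne_of_gt hq0
  obtain ⟨α, hα⟩ : ∃ a : ℝ, a = δt / (q * δu ^ 2) := ⟨_, rfl⟩
  obtain ⟨β, hβ⟩ : ∃ b : ℝ, b = δt / (q * (2 * δu * L)) := ⟨_, rfl⟩
  have hα0 : 0 ≤ α := by rw [hα]; positivity
  have hβ0 : 0 ≤ β := by rw [hβ]; positivity
  have hβα : β ≤ α := by
    rw [hα, hβ]
    gcongr; nlinarith
  have h2α : 2 * α ≤ 1 := by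
    have hd : 0 < q * δu ^ 2 := by positivity
    rw [hα, show 2 * (δt / (q * δu ^ 2)) = 2 * δt / (q * δu ^ 2) by ring,
      div_le_one hd]
    nlinarith [mul_nonneg (by linarith : (0:ℝ) ≤ q - 1) (sq_nonneg δu)]
  have hpe : p = (w j (k+1) - w j (k-1)) / (2 * δu) := by rw [hp]; rfl
  clear_value δu δt p L q
  have hw : w (j+1) k =
      (α + β) * w j (k+1) + (1 - 2*α) * w j k + (α - β) * w j (k-1) := by
    simp only [dtime, d2] at hs
    rw [hpe, div_eq_iff hδtne] at hs
    rw [hα, hβ]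
    linear_combination hs
  have hb1 : |w j (k+1)| ≤ M := hMem _ (Finset.mem_range.2 (by omega))
  have hb2 : |w j k| ≤ M := hMem _ (Finset.mem_range.2 (by omega))
  have hb3 : |w j (k-1)| ≤ M := hMem _ (Finset.mem_range.2 (by omega))
  calc |w (j+1) k|
      = |(α + β) * w j (k+1) + (1 - 2*α) * w j k + (α - β) * w j (k-1)| := by rw [hw]
    _ ≤ |(α + β) * w j (k+1)| + |(1 - 2*α) * w j k| + |(α - β) * w j (k-1)| :=
        abs_add_three _ _ _
    _ = (α + β) * |w j (k+1)| + (1 - 2*α) * |w j k| + (α - β) * |w j (k-1)| := by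
        rw [abs_mul, abs_mul, abs_mul,
          abs_of_nonneg (show (0:ℝ) ≤ α + β by linarith),
          abs_of_nonneg (show (0:ℝ) ≤ 1 - 2*α by linarith),
          abs_of_nonneg (show (0:ℝ) ≤ α - β by linarith)]
    _ ≤ (α + β) * M + (1 - 2*α) * M + (α - β) * M := by
        gcongr <;> linarith
    _ = M := by ring
    _ ≤ R := le_max_left _ _
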